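/- Let K ≥ 2 and N ≥ 1 be integers. Define the points P_i = ((1 + i(K−1)/K)·N/K, N(K−i)/(K(i+1))) ∈ ℝ² for i ∈ {0,…,K}, and for j ∈ {1,…,K−1} define L_j(S) = N(K−j)/(Kj) − K(S − jN/K)/(j(j+1)). Then for every real S with N/K ≤ S ≤ N there exists a real R such that (S, R) lies in the convex hull of {P_0, P_1, …, P_K} and (K−1)·R ≤ K·max_{j ∈ {1,…,K−1}} L_j(S). -/

import Mathlib

/-- The achievable storage-rate pair `P_i = ((1 + i(K−1)/K)·N/K, N(K−i)/(K(i+1)))` of the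
structural-invariant coded shuffling scheme. -/
noncomputable def Ppt (K N i : ℕ) : ℝ × ℝ :=
  ((1 + (i : ℝ) * ((K : ℝ) - 1) / K) * N / K,
    (N : ℝ) * ((K : ℝ) - i) / ((K : ℝ) * ((i : ℝ) + 1)))

/-- The `j`-th lower-bound line on the worst-case communication rate:
`L_j(S) = N(K−j)/(Kj) − K(S − jN/K)/(j(j+1))`. -/
noncomputable def Lline (K N j : ℕ) (S : ℝ) : ℝ :=
  (N : ℝ) * ((K : ℝ) - (j : ℝ)) / ((K : ℝ) * (j : ℝ)) -
    (K : ℝ) * (S - (j : ℝ) * (N : ℝ) / (K : ℝ)) / ((j : ℝ) * ((j : ℝ) + 1))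

private lemma gapA1 (k n x : ℝ) (hk : 2 ≤ k) (hn : 0 ≤ n) (hx0 : 0 ≤ x) (hxk : x ≤ k - 2) :
    (k-1) * (n*(k-x)/(k*(x+1))) ≤
      k * (n*(k-(x+1))/(k*(x+1)) - k*((1+x*(k-1)/k)*n/k - (x+1)*n/k)/((x+1)*((x+1)+1))) := by
  have hk0 : (0:ℝ) < k := by linarith
  have h1 : (0:ℝ) < x + 1 := by linarith
  have h2 : (0:ℝ) < x + 2 := by linarith
  have key : k * (n*(k-(x+1))/(k*(x+1)) - k*((1+x*(k-1)/k)*n/k - (x+1)*n/k)/((x+1)*((x+1)+1)))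
      - (k-1) * (n*(k-x)/(k*(x+1))) = n*x*(k-x-2)/(k*(x+1)*(x+2)) := by
    field_simp
    ring
  nlinarith [div_nonneg (mul_nonneg (mul_nonneg hn hx0) (by linarith : (0:ℝ) ≤ k-x-2))
    (le_of_lt (by positivity : (0:ℝ) < k*(x+1)*(x+2)))]

private lemma gapA2 (k n x : ℝ) (hk : 2 ≤ k) (hn : 0 ≤ n) (hx0 : 0 ≤ x) (hxk : x ≤ k - 1) :
    (k-1) * (n*(k-(x+1))/(k*((x+1)+1))) ≤
      k * (n*(k-(x+1))/(k*(x+1)) - k*((1+(x+1)*(k-1)/k)*n/k - (x+1)*n/k)/((x+1)*((x+1)+1))) := by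
  have hk0 : (0:ℝ) < k := by linarith
  have h1 : (0:ℝ) < x + 1 := by linarith
  have h2 : (0:ℝ) < x + 2 := by linarith
  have key : k * (n*(k-(x+1))/(k*(x+1)) - k*((1+(x+1)*(k-1)/k)*n/k - (x+1)*n/k)/((x+1)*((x+1)+1)))
      - (k-1) * (n*(k-(x+1))/(k*((x+1)+1))) = n*(k-x-1)/(k*(x+2)) := by
    field_simp
    ring
  nlinarith [div_nonneg (mul_nonneg hn (by linarith : (0:ℝ) ≤ k-x-1))
    (le_of_lt (by positivity : (0:ℝ) < k*(x+2)))]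

private lemma gapB1 (k n : ℝ) (hk : 2 ≤ k) (hn : 0 ≤ n) :
    (k-1) * (n*(k-(k-1))/(k*((k-1)+1))) ≤
      k * (n*(k-(k-1))/(k*(k-1)) - k*((1+(k-1)*(k-1)/k)*n/k - (k-1)*n/k)/((k-1)*((k-1)+1))) := by
  have hk0 : (0:ℝ) < k := by linarith
  have h1 : (0:ℝ) < k - 1 := by linarith
  have key : k * (n*(k-(k-1))/(k*(k-1)) - k*((1+(k-1)*(k-1)/k)*n/k - (k-1)*n/k)/((k-1)*((k-1)+1)))
      - (k-1) * (n*(k-(k-1))/(k*((k-1)+1))) = n/(k*k) := by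
    field_simp
    ring
  nlinarith [div_nonneg hn (le_of_lt (by positivity : (0:ℝ) < k*k))]

private lemma gapB2 (k n : ℝ) (hk : 2 ≤ k) (hn : 0 ≤ n) :
    (k-1) * (n*(k-k)/(k*(k+1))) ≤
      k * (n*(k-(k-1))/(k*(k-1)) - k*((1+k*(k-1)/k)*n/k - (k-1)*n/k)/((k-1)*((k-1)+1))) := by
  have hk0 : (0:ℝ) < k := by linarith
  have h1 : (0:ℝ) < k - 1 := by linarith
  have key : k * (n*(k-(k-1))/(k*(k-1)) - k*((1+k*(k-1)/k)*n/k - (k-1)*n/k)/((k-1)*((k-1)+1))) = 0 := by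
    field_simp
    ring
  have key2 : (k-1) * (n*(k-k)/(k*(k+1))) = 0 := by ring_nf
  rw [key, key2]

private lemma gapLaff (K N j : ℕ) (a b x y : ℝ) (hab : a + b = 1) (hj : 1 ≤ j)
    (hK : 1 ≤ K) :
    Lline K N j (a*x + b*y) = a * Lline K N j x + b * Lline K N j y := by
  have hj0 : (0:ℝ) < (j:ℝ) := by exact_mod_cast hj
  have hk0 : (0:ℝ) < (K:ℝ) := by exact_mod_cast hK
  have hb : a = 1 - b := by linarith
  subst hb
  simp only [Lline]
  field_simp
  ring

/-- Theorem 3 (convex-geometric form): for every storage `S ∈ [N/K, N]` there is a rate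
`R` with `(S, R)` in the convex hull of the achievable points `P_0,…,P_K` such that
`(K−1)·R ≤ K·max_{1 ≤ j ≤ K−1} L_j(S)`, i.e. the achievable worst-case rate is within a
factor `K/(K−1)` of the information-theoretic lower bound. -/
theorem achievable_within_gap (K N : ℕ) (hK : 2 ≤ K) (hN : 1 ≤ N) :
    ∀ S : ℝ, (N : ℝ) / K ≤ S → S ≤ (N : ℝ) →
      ∃ R : ℝ, (S, R) ∈ convexHull ℝ (Ppt K N '' {i | i ≤ K}) ∧
        ((K : ℝ) - 1) * R ≤
          (K : ℝ) * (Finset.Icc 1 (K - 1)).sup' (Finset.nonempty_Icc.mpr (by omega))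
            (fun j => Lline K N j S) := by
  intro S hS1 hS2
  have hk2 : (2:ℝ) ≤ (K:ℝ) := by exact_mod_cast hK
  have hk0 : (0:ℝ) < (K:ℝ) := by linarith
  have hn1 : (1:ℝ) ≤ (N:ℝ) := by exact_mod_cast hN
  have hn0 : (0:ℝ) < (N:ℝ) := by linarith
  set k : ℝ := (K:ℝ) with hkdef
  set n : ℝ := (N:ℝ) with hndef
  have hd0 : (0:ℝ) < (k-1)*n/k^2 := div_pos (mul_pos (by linarith) hn0) (by positivity)
  set d : ℝ := (k-1)*n/k^2 with hddef
  -- locate the segment index i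
  set t : ℝ := (S - n/k) / d with htdef
  have ht0 : 0 ≤ t := div_nonneg (by linarith) hd0.le
  have htd : t * d = S - n/k := div_mul_cancel₀ _ (ne_of_gt hd0)
  have hkd : k * d = n - n/k := by rw [hddef]; field_simp
  have htK : t ≤ k := by
    rw [htdef, div_le_iff₀ hd0]
    linarith
  set i : ℕ := min (K-1) ⌊t⌋₊ with hidef
  have hiK1 : i ≤ K - 1 := min_le_left _ _
  have hiK : i + 1 ≤ K := by omega
  have hit : (i:ℝ) ≤ t := le_trans (by exact_mod_cast Nat.cast_le.mpr (min_le_right (K-1) ⌊t⌋₊)) (Nat.floor_le ht0)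
  -- x-coordinates
  have hX : ∀ m : ℕ, (Ppt K N m).1 = n/k + m*d := by
    intro m
    simp only [Ppt, hddef]
    field_simp
    ring
  have hxiS : (Ppt K N i).1 ≤ S := by
    rw [hX]
    nlinarith [mul_le_mul_of_nonneg_right hit hd0.le]
  have hSxi : S ≤ (Ppt K N (i+1)).1 := by
    rw [hX]
    by_cases hc : ⌊t⌋₊ ≤ K - 1
    · have hi' : i = ⌊t⌋₊ := min_eq_right hc
      have : t < (i:ℝ) + 1 := by
        rw [hi']
        exact Nat.lt_floor_add_one t
      push_cast
      nlinarith [mul_le_mul_of_nonneg_right this.le hd0.le]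

    · have hi' : i = K - 1 := min_eq_left (by omega)
      have hiK' : ((i:ℝ) + 1) = k := by
        rw [hi']
        push_cast [Nat.cast_sub (by omega : 1 ≤ K)]
        ring
      push_cast
      rw [hiK']
      linarith
  -- convex combination
  set a : ℝ := ((Ppt K N (i+1)).1 - S)/d with hadef
  set b : ℝ := (S - (Ppt K N i).1)/d with hbdef
  have ha : 0 ≤ a := div_nonneg (by linarith) hd0.le
  have hb : 0 ≤ b := div_nonneg (by linarith) hd0.le
  have hdiff : (Ppt K N (i+1)).1 - (Ppt K N i).1 = d := by
    rw [hX, hX]; push_cast; ring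
  have hab : a + b = 1 := by
    rw [hadef, hbdef, ← add_div, div_eq_one_iff_eq (ne_of_gt hd0)]
    linarith
  have hbd : b * d = S - (Ppt K N i).1 := by
    rw [hbdef]; field_simp
  have hSeq : a * (Ppt K N i).1 + b * (Ppt K N (i+1)).1 = S := by
    linear_combination (Ppt K N i).1 * hab + b * hdiff + hbd
  refine ⟨a * (Ppt K N i).2 + b * (Ppt K N (i+1)).2, ?_, ?_⟩
  · have hmem : (S, a * (Ppt K N i).2 + b * (Ppt K N (i+1)).2)
        = a • Ppt K N i + b • Ppt K N (i+1) := by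
      rw [Prod.ext_iff]
      refine ⟨?_, ?_⟩
      · simp only [Prod.fst_add, Prod.smul_fst, smul_eq_mul]
        exact hSeq.symm
      · simp only [Prod.snd_add, Prod.smul_snd, smul_eq_mul]
    rw [hmem]
    exact (convex_convexHull ℝ _)
      (subset_convexHull ℝ _ (Set.mem_image_of_mem _ (show i ∈ {m : ℕ | m ≤ K} by simp; omega)))
      (subset_convexHull ℝ _ (Set.mem_image_of_mem _ (show i+1 ∈ {m : ℕ | m ≤ K} by simpa using hiK))) ha hb hab
  ·
    set j : ℕ := min (i+1) (K-1) with hjdef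
    have hj1 : 1 ≤ j := by omega
    have hjK : j ≤ K - 1 := min_le_right _ _
    have hjmem : j ∈ Finset.Icc 1 (K-1) := Finset.mem_Icc.mpr ⟨hj1, hjK⟩
    have hsup : Lline K N j S ≤ (Finset.Icc 1 (K-1)).sup'
        (Finset.nonempty_Icc.mpr (by omega)) (fun j => Lline K N j S) :=
      by exact Finset.le_sup' (fun m => Lline K N m S) hjmem
    have hj0 : (0:ℝ) < (j:ℝ) := by exact_mod_cast hj1
    have E1 : (k-1) * (Ppt K N i).2 ≤ k * Lline K N j (Ppt K N i).1 := by
      by_cases hc : i + 1 ≤ K - 1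
      · have hj' : j = i + 1 := min_eq_left hc
        have hxk2 : (i:ℝ) ≤ k - 2 := by
          have : ((i:ℝ) + 2) ≤ (K:ℝ) := by exact_mod_cast (show i + 2 ≤ K by omega)
          linarith
        rw [hj']
        simp only [Ppt, Lline]
        push_cast
        exact gapA1 k n (i:ℝ) hk2 hn0.le (Nat.cast_nonneg i) hxk2
      · have hi' : i = K - 1 := by omega
        have hj' : j = K - 1 := by omega
        have hcast : ((K - 1 : ℕ) : ℝ) = k - 1 := by
          push_cast [Nat.cast_sub (show 1 ≤ K by omega)]; ring
        rw [hj', hi']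
        simp only [Ppt, Lline]
        rw [hcast]
        exact gapB1 k n hk2 hn0.le
    have E2 : (k-1) * (Ppt K N (i+1)).2 ≤ k * Lline K N j (Ppt K N (i+1)).1 := by
      by_cases hc : i + 1 ≤ K - 1
      · have hj' : j = i + 1 := min_eq_left hc
        have hxk1 : (i:ℝ) ≤ k - 1 := by
          have : ((i:ℝ) + 1) ≤ (K:ℝ) := by exact_mod_cast (show i + 1 ≤ K by omega)
          linarith
        rw [hj']
        simp only [Ppt, Lline]
        push_cast
        exact gapA2 k n (i:ℝ) hk2 hn0.le (Nat.cast_nonneg i) hxk1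
      · have hi' : i + 1 = K := by omega
        have hj' : j = K - 1 := by omega
        have hcast : ((K - 1 : ℕ) : ℝ) = k - 1 := by
          push_cast [Nat.cast_sub (show 1 ≤ K by omega)]; ring
        rw [hj', hi']
        simp only [Ppt, Lline]
        rw [hcast]
        exact gapB2 k n hk2 hn0.le
    have haff : k * Lline K N j S =
        a * (k * Lline K N j (Ppt K N i).1) + b * (k * Lline K N j (Ppt K N (i+1)).1) := by
      rw [← hSeq, gapLaff K N j a b _ _ hab hj1 (by omega)]
      ring
    have main : (k-1) * (a * (Ppt K N i).2 + b * (Ppt K N (i+1)).2) ≤ k * Lline K N j S :=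
      calc (k-1) * (a * (Ppt K N i).2 + b * (Ppt K N (i+1)).2)
          = a * ((k-1) * (Ppt K N i).2) + b * ((k-1) * (Ppt K N (i+1)).2) := by ring
        _ ≤ a * (k * Lline K N j (Ppt K N i).1) + b * (k * Lline K N j (Ppt K N (i+1)).1) :=
            add_le_add (mul_le_mul_of_nonneg_left E1 ha) (mul_le_mul_of_nonneg_left E2 hb)
        _ = k * Lline K N j S := haff.symm
    exact le_trans main (mul_le_mul_of_nonneg_left hsup (by linarith))
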